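/- arXiv:1402.6981 — 2 statements merged into one kernel-verified Lean document; each statement's English description precedes it below -/
import Mathlib

section
/- With the partition block decomposition of so(d), the subspace m of block-off-diagonal skew matrices is a Lie subalgebra (i.e., [m,m] ⊆ m) if and only if every block has size 1 (κ_i = 1 for all i), in which case [m,m] = 0 is false in general but the diagonal blocks of any commutator [X,Y] with X,Y ∈ m vanish. -/
open Matrix

lemma stdBasisMatrix_transpose' {n : Type*} [DecidableEq n] (i j : n) (c : ℝ) :
    (Matrix.single i j c)ᵀ = Matrix.single j i c := by
  ext a b
  simp [Matrix.single, and_comm]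

/-- With the partition block decomposition of `so(d)`, `r ≥ 2`, the diagonal blocks of
`[X, Y]` vanish for all `X, Y` in the block-off-diagonal subspace `m` if and only if
every block has size `1` (`κ i = 1` for all `i`). -/
theorem stmt_11 (r : ℕ) (hr : 2 ≤ r) (κ : Fin r → ℕ) (hκ : ∀ i, 1 ≤ κ i) :
    (∀ X Y : Matrix ((i : Fin r) × Fin (κ i)) ((i : Fin r) × Fin (κ i)) ℝ,
      Xᵀ = -X →
      (∀ (i : Fin r) (a b : Fin (κ i)), X ⟨i, a⟩ ⟨i, b⟩ = 0) →
      Yᵀ = -Y →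
      (∀ (i : Fin r) (a b : Fin (κ i)), Y ⟨i, a⟩ ⟨i, b⟩ = 0) →
      ∀ (i : Fin r) (a b : Fin (κ i)), (X * Y - Y * X) ⟨i, a⟩ ⟨i, b⟩ = 0)
      ↔ ∀ i, κ i = 1 := by
  constructor
  · intro h
    by_contra hk
    push_neg at hk
    obtain ⟨i, hi⟩ := hk
    have h2 : 2 ≤ κ i := by have := hκ i; omega
    have : Nontrivial (Fin r) := Fin.nontrivial_iff_two_le.mpr hr
    obtain ⟨j, hj⟩ := exists_ne i
    set a0 : Fin (κ i) := ⟨0, by omega⟩ with ha0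
    set a1 : Fin (κ i) := ⟨1, by omega⟩ with ha1
    set c : Fin (κ j) := ⟨0, by have := hκ j; omega⟩ with hc
    set u : (i : Fin r) × Fin (κ i) := ⟨i, a0⟩ with hu
    set u' : (i : Fin r) × Fin (κ i) := ⟨i, a1⟩ with hu'
    set v : (i : Fin r) × Fin (κ i) := ⟨j, c⟩ with hv
    have huv : u ≠ v := by simp [hu, hv, Sigma.ext_iff, hj.symm]
    have hu'v : u' ≠ v := by simp [hu', hv, Sigma.ext_iff, hj.symm]
    have huu' : u ≠ u' := by
      simp [hu, hu', Sigma.ext_iff, ha0, ha1, Fin.ext_iff]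
    set X : Matrix ((i : Fin r) × Fin (κ i)) ((i : Fin r) × Fin (κ i)) ℝ :=
      Matrix.single u v 1 - Matrix.single v u 1 with hX
    set Y : Matrix ((i : Fin r) × Fin (κ i)) ((i : Fin r) × Fin (κ i)) ℝ :=
      Matrix.single u' v 1 - Matrix.single v u' 1 with hY
    have hXt : Xᵀ = -X := by
      simp [hX, transpose_sub, stdBasisMatrix_transpose']
    have hYt : Yᵀ = -Y := by
      simp [hY, transpose_sub, stdBasisMatrix_transpose']
    have hXd : ∀ (k : Fin r) (a b : Fin (κ k)), X ⟨k, a⟩ ⟨k, b⟩ = 0 := by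
      intro k a b
      have p1 : ¬(u = ⟨k, a⟩ ∧ v = ⟨k, b⟩) := fun ⟨e1, e2⟩ =>
        hj (((congrArg Sigma.fst e2 : j = k)).trans ((congrArg Sigma.fst e1 : i = k)).symm)
      have p2 : ¬(v = ⟨k, a⟩ ∧ u = ⟨k, b⟩) := fun ⟨e1, e2⟩ =>
        hj (((congrArg Sigma.fst e1 : j = k)).trans ((congrArg Sigma.fst e2 : i = k)).symm)
      rw [hX, Matrix.sub_apply, Matrix.single_apply_of_ne _ _ _ _ _ p1,
        Matrix.single_apply_of_ne _ _ _ _ _ p2, sub_zero]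
    have hYd : ∀ (k : Fin r) (a b : Fin (κ k)), Y ⟨k, a⟩ ⟨k, b⟩ = 0 := by
      intro k a b
      have p1 : ¬(u' = ⟨k, a⟩ ∧ v = ⟨k, b⟩) := fun ⟨e1, e2⟩ =>
        hj (((congrArg Sigma.fst e2 : j = k)).trans ((congrArg Sigma.fst e1 : i = k)).symm)
      have p2 : ¬(v = ⟨k, a⟩ ∧ u' = ⟨k, b⟩) := fun ⟨e1, e2⟩ =>
        hj (((congrArg Sigma.fst e1 : j = k)).trans ((congrArg Sigma.fst e2 : i = k)).symm)
      rw [hY, Matrix.sub_apply, Matrix.single_apply_of_ne _ _ _ _ _ p1,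
        Matrix.single_apply_of_ne _ _ _ _ _ p2, sub_zero]
    have key := h X Y hXt hXd hYt hYd i a0 a1
    have hXY : (X * Y) u u' = -1 := by
      rw [hX, hY, sub_mul, mul_sub, mul_sub]
      simp only [Matrix.sub_apply]
      rw [Matrix.single_mul_apply_same, Matrix.single_mul_apply_same,
        Matrix.single_mul_apply_of_ne (h := huv),
        Matrix.single_mul_apply_of_ne (h := huv)]
      rw [Matrix.single_apply_of_row_ne hu'v, Matrix.single_apply_same]
      ring
    have hYX : (Y * X) u u' = 0 := by
      rw [hX, hY, sub_mul, mul_sub, mul_sub]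
      simp only [Matrix.sub_apply]
      rw [Matrix.single_mul_apply_of_ne (h := huu'),
        Matrix.single_mul_apply_of_ne (h := huu'),
        Matrix.single_mul_apply_of_ne (h := huv),
        Matrix.single_mul_apply_of_ne (h := huv)]
      ring
    rw [show ((⟨i, a0⟩ : (i : Fin r) × Fin (κ i))) = u from rfl,
      show ((⟨i, a1⟩ : (i : Fin r) × Fin (κ i))) = u' from rfl,
      Matrix.sub_apply, hXY, hYX] at key
    norm_num at key
  · intro hk X Y hXt hXd hYt hYd i a b
    have hsub : Subsingleton (Fin (κ i)) := by
      rw [hk i]; infer_instance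
    have hab : a = b := Subsingleton.elim a b
    subst hab
    have hX' : ∀ p q, X q p = -X p q := by
      intro p q
      have := congrFun (congrFun hXt p) q
      simpa using this
    have hY' : ∀ p q, Y q p = -Y p q := by
      intro p q
      have := congrFun (congrFun hYt p) q
      simpa using this
    rw [Matrix.sub_apply, Matrix.mul_apply, Matrix.mul_apply, sub_eq_zero]
    apply Finset.sum_congr rfl
    intro p _
    rw [hX' ⟨i, a⟩ p, hY' ⟨i, a⟩ p]
    ring
end

section
/- If X is a tangent vector to G at g and ω is a connection on G/H (equivariant consistent g-valued one-form), then θ_g(X) := g⁻¹·X − g⁻¹·ω_{[g]}([X])·g lies in the isotropy subalgebra h, where [·] denotes the projections G → G/H and TG → T(G/H). -/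
open Matrix

/-- For a tangent vector `X = ξ·g` to a matrix group `G` at `g`, and a connection `ω`
on `G/H` (a consistent `𝔤`-valued one-form), the element
`θ_g(X) = g⁻¹(ξ − ω_{[g]}([X]))g` lies in the isotropy algebra
`h = {η : η·o = 0}` of the origin.  Here `M = G/H` carries the `GL`-action, tangent
spaces of `M` are modelled by `E`, `T g x` is the (invertible) pushforward of the
action of `g` at `x`, and `inf` is the infinitesimal action, which is equivariant:
`inf (g ξ g⁻¹) (g•x) = T g x (inf ξ x)`. -/
theorem stmt_19 {d : ℕ} {M E : Type*} [AddCommGroup E] [Module ℝ E]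
    [MulAction (Matrix (Fin d) (Fin d) ℝ)ˣ M]
    (o : M)
    (T : (Matrix (Fin d) (Fin d) ℝ)ˣ → M → (E ≃ₗ[ℝ] E))
    (inf : Matrix (Fin d) (Fin d) ℝ →ₗ[ℝ] (M → E))
    (hequiv : ∀ (g : (Matrix (Fin d) (Fin d) ℝ)ˣ) (ξ : Matrix (Fin d) (Fin d) ℝ)
      (x : M),
      inf ((↑g : Matrix (Fin d) (Fin d) ℝ) * ξ * (↑g⁻¹ : Matrix (Fin d) (Fin d) ℝ))
          (g • x)
        = T g x (inf ξ x))
    (ω : M → (E →ₗ[ℝ] Matrix (Fin d) (Fin d) ℝ))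
    (hcons : ∀ (x : M) (v : E), inf (ω x v) x = v)
    (g : (Matrix (Fin d) (Fin d) ℝ)ˣ) (ξ : Matrix (Fin d) (Fin d) ℝ) :
    inf ((↑g⁻¹ : Matrix (Fin d) (Fin d) ℝ)
          * (ξ - ω (g • o) (inf ξ (g • o)))
          * (↑g : Matrix (Fin d) (Fin d) ℝ)) o = 0 := by
  set η : Matrix (Fin d) (Fin d) ℝ :=
    (↑g⁻¹ : Matrix (Fin d) (Fin d) ℝ) * (ξ - ω (g • o) (inf ξ (g • o)))
      * (↑g : Matrix (Fin d) (Fin d) ℝ) with hη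
  have key : (↑g : Matrix (Fin d) (Fin d) ℝ) * η * (↑g⁻¹ : Matrix (Fin d) (Fin d) ℝ)
      = ξ - ω (g • o) (inf ξ (g • o)) := by
    rw [hη]
    have h1 : (↑g : Matrix (Fin d) (Fin d) ℝ) * (↑g⁻¹ : Matrix (Fin d) (Fin d) ℝ) = 1 := by
      rw [← Units.val_mul]; simp
    have h2 : (↑g⁻¹ : Matrix (Fin d) (Fin d) ℝ) * (↑g : Matrix (Fin d) (Fin d) ℝ) = 1 := by
      rw [← Units.val_mul]; simp
    calc (↑g : Matrix (Fin d) (Fin d) ℝ) * ((↑g⁻¹ : Matrix (Fin d) (Fin d) ℝ)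
          * (ξ - ω (g • o) (inf ξ (g • o))) * (↑g : Matrix (Fin d) (Fin d) ℝ)) * (↑g⁻¹ : Matrix (Fin d) (Fin d) ℝ)
        = ((↑g : Matrix (Fin d) (Fin d) ℝ) * (↑g⁻¹ : Matrix (Fin d) (Fin d) ℝ)) * (ξ - ω (g • o) (inf ξ (g • o)))
            * ((↑g : Matrix (Fin d) (Fin d) ℝ) * (↑g⁻¹ : Matrix (Fin d) (Fin d) ℝ)) := by simp only [mul_assoc]
      _ = ξ - ω (g • o) (inf ξ (g • o)) := by rw [h1]; simp
  have h0 : T g o (inf η o) = 0 := by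
    rw [← hequiv g η o, key]
    have := hcons (g • o) (inf ξ (g • o))
    simp [map_sub, this]
  have := (T g o).injective (by simpa using h0)
  simpa using this
end
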